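/- arXiv:2512.16768 — 3 statements merged into one kernel-verified Lean document; each statement's English description precedes it below -/
import Mathlib

section
/- Let X ~ N(0, I_d), m₁ ∈ ℝ^d, and Σ₁ positive definite with Σ₁ ≠ I_d. Let E = ‖m₁ + (Σ₁^{1/2} - I_d)X‖² and let ρ = max_i (√λ_i(Σ₁) - 1)² > 0 where λ_i(Σ₁) are the eigenvalues of Σ₁. Then for every u > 0, P(E ≥ u) ≤ 2^{d/2} exp(‖m₁‖²/(2ρ)) · exp(-u/(4ρ)). -/
open MeasureTheory ProbabilityTheory Matrix Real
open scoped ENNReal NNReal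

theorem aux_lintegral_pi_prod (n : ℕ) (μ : Measure ℝ) [SigmaFinite μ]
    (f : Fin n → ℝ → ℝ≥0∞) (hf : ∀ i, Measurable (f i)) :
    ∫⁻ x : Fin n → ℝ, ∏ i, f i (x i) ∂(Measure.pi fun _ => μ) = ∏ i, ∫⁻ y, f i y ∂μ := by
  induction n with
  | zero =>
      simp [lintegral_const, Measure.pi_univ]
  | succ n ih =>
      have hF : Measurable fun x : Fin (n+1) → ℝ => ∏ i, f i (x i) :=
        Finset.measurable_prod _ fun i _ => (hf i).comp (measurable_pi_apply i)
      have hmp := (measurePreserving_piFinSuccAbove (fun _ : Fin (n+1) => μ) 0).symm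
      rw [← hmp.lintegral_comp hF]
      simp_rw [MeasurableEquiv.piFinSuccAbove_symm_apply, Fin.insertNthEquiv,
        Fin.insertNth_zero, Equiv.coe_fn_mk, Fin.prod_univ_succ, Fin.cons_zero, Fin.cons_succ]
      simp only [Fin.zero_succAbove, cast_eq]
      rw [lintegral_prod_mul (f := f 0) (g := fun x : Fin n → ℝ => ∏ i, f i.succ (x i))
        (hf 0).aemeasurable
        (Finset.measurable_prod _ fun i _ => (hf i.succ).comp (measurable_pi_apply i)).aemeasurable]
      rw [ih (fun i => f i.succ) (fun i => hf i.succ)]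

theorem aux_gauss1d (w : ℝ) :
    ∫⁻ y, ENNReal.ofReal (rexp (w * y + y^2/4)) ∂(gaussianReal 0 1)
      = ENNReal.ofReal (Real.sqrt 2 * rexp (w^2)) := by
  rw [gaussianReal_of_var_ne_zero 0 one_ne_zero,
    lintegral_withDensity_eq_lintegral_mul _ (measurable_gaussianPDF 0 1)
      (by fun_prop : Measurable fun y : ℝ => ENNReal.ofReal (rexp (w * y + y^2/4)))]
  have hpt : ∀ y : ℝ, (gaussianPDF 0 1 * fun y => ENNReal.ofReal (rexp (w * y + y^2/4))) y
      = ENNReal.ofReal ((Real.sqrt (2 * π))⁻¹ * rexp (w^2) * rexp (-(1/4) * (y - 2*w)^2)) := by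
    intro y
    simp only [Pi.mul_apply, gaussianPDF, ← ENNReal.ofReal_mul (gaussianPDFReal_nonneg 0 1 y)]
    congr 1
    rw [gaussianPDFReal_def]
    simp only [NNReal.coe_one, mul_one, sub_zero]
    rw [mul_assoc, mul_assoc, ← Real.exp_add, ← Real.exp_add]
    congr 1
    ring
  simp_rw [hpt]
  rw [← ofReal_integral_eq_lintegral_ofReal]
  · congr 1
    rw [integral_const_mul, integral_sub_right_eq_self (μ := volume) (fun y => rexp (-(1/4) * y^2)) (2*w),
      integral_gaussian]
    have hπ : 0 < π := Real.pi_pos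
    rw [mul_assoc, mul_comm (rexp (w^2)), ← mul_assoc]
    congr 1
    rw [div_div_eq_mul_div, ← Real.sqrt_inv, ← Real.sqrt_mul (by positivity)]
    rw [show (2 * π)⁻¹ * (π * 4 / 1) = 2 by field_simp; ring]
  · exact (Integrable.comp_sub_right (integrable_exp_neg_mul_sq (by norm_num : (0:ℝ) < 1/4)) (2*w)).const_mul _
  · exact Filter.Eventually.of_forall fun y => by positivity

theorem aux_unitary_norm (d : ℕ) (U : Matrix (Fin d) (Fin d) ℝ) (hU : Uᵀ * U = 1)
    (v : Fin d → ℝ) : (U *ᵥ v) ⬝ᵥ (U *ᵥ v) = v ⬝ᵥ v := by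
  rw [Matrix.dotProduct_mulVec, ← Matrix.mulVec_transpose, Matrix.mulVec_mulVec, hU,
    Matrix.one_mulVec]

theorem aux_quadratic_bound (d : ℕ) (Sig S : Matrix (Fin d) (Fin d) ℝ)
    (hSig : Sig.PosDef) (hHerm : Sig.IsHermitian) (hS : S.PosDef) (hSsq : S * S = Sig)
    (ρ : ℝ) (hρ : ∀ i, (Real.sqrt (hHerm.eigenvalues i) - 1)^2 ≤ ρ)
    (x : Fin d → ℝ) : ((S - 1) *ᵥ x) ⬝ᵥ ((S - 1) *ᵥ x) ≤ ρ * (x ⬝ᵥ x) := by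
  have hSeq : S = hSig.posSemidef.1.cfc Real.sqrt := by
    open scoped MatrixOrder in
    have h := CFC.sqrt_unique (a := Sig) (b := S) hSsq hS.posSemidef.nonneg
    open scoped MatrixOrder in
    rw [← h, CFC.sqrt_eq_cfc, cfc_nnreal_eq_real _ Sig hSig.posSemidef.nonneg,
      hSig.posSemidef.1.cfc_eq]
    congr 1
    funext z
    simp [Real.coe_sqrt]
    rcases le_total 0 z with hz | hz
    · rw [max_eq_left hz]
    · rw [max_eq_right hz, Real.sqrt_zero, Real.sqrt_eq_zero'.mpr hz]
  have hρ' : ∀ i, (Real.sqrt (hSig.posSemidef.1.eigenvalues i) - 1)^2 ≤ ρ := hρ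
  set U : Matrix (Fin d) (Fin d) ℝ :=
    (hSig.posSemidef.1.eigenvectorUnitary : Matrix (Fin d) (Fin d) ℝ) with hUdef
  have hstar : star U = Uᵀ := by
    rw [Matrix.star_eq_conjTranspose, Matrix.conjTranspose_eq_transpose_of_trivial]
  have hU1 : Uᵀ * U = 1 := by
    rw [← hstar]; exact mem_unitaryGroup_iff'.mp hSig.posSemidef.1.eigenvectorUnitary.2
  have hU2 : U * Uᵀ = 1 := by
    rw [← hstar]; exact mem_unitaryGroup_iff.mp hSig.posSemidef.1.eigenvectorUnitary.2
  set g : Fin d → ℝ := fun i => Real.sqrt (hSig.posSemidef.1.eigenvalues i) - 1 with hgdef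
  have hA : S - 1 = U * Matrix.diagonal g * Uᵀ := by
    have hsqrt : hSig.posSemidef.1.cfc Real.sqrt
        = U * Matrix.diagonal (fun i => Real.sqrt (hSig.posSemidef.1.eigenvalues i)) * Uᵀ := by
      rw [Matrix.IsHermitian.cfc, Unitary.conjStarAlgAut_apply, hstar]
      simp only [RCLike.ofReal_real_eq_id, Function.id_comp]
      rfl
    have hone : (1 : Matrix (Fin d) (Fin d) ℝ) = U * Matrix.diagonal (fun _ => (1:ℝ)) * Uᵀ := by
      rw [Matrix.diagonal_one, Matrix.mul_one, hU2]
    rw [hSeq, hsqrt, hone, ← Matrix.sub_mul, ← Matrix.mul_sub, Matrix.diagonal_sub]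
  set y : Fin d → ℝ := Uᵀ *ᵥ x with hydef
  have hAx : (S - 1) *ᵥ x = U *ᵥ (Matrix.diagonal g *ᵥ y) := by
    rw [hA, ← Matrix.mulVec_mulVec, ← Matrix.mulVec_mulVec]
  have hyx : y ⬝ᵥ y = x ⬝ᵥ x := by
    have := aux_unitary_norm d Uᵀ (by rw [Matrix.transpose_transpose, hU2]) x
    rwa [← hydef] at this
  rw [hAx, aux_unitary_norm d U hU1]
  have hz : ∀ i, (Matrix.diagonal g *ᵥ y) i = g i * y i := fun i => Matrix.mulVec_diagonal g y i
  calc (Matrix.diagonal g *ᵥ y) ⬝ᵥ (Matrix.diagonal g *ᵥ y)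
      = ∑ i, (g i * y i) * (g i * y i) := by
        simp only [dotProduct, hz]
    _ ≤ ∑ i, ρ * (y i * y i) := by
        refine Finset.sum_le_sum fun i _ => ?_
        have h1 : (g i * y i) * (g i * y i) = (g i)^2 * (y i)^2 := by ring
        have h2 : ρ * (y i * y i) = ρ * (y i)^2 := by ring
        rw [h1, h2]
        exact mul_le_mul_of_nonneg_right (hρ' i) (sq_nonneg _)
    _ = ρ * (y ⬝ᵥ y) := by rw [dotProduct, Finset.mul_sum]
    _ = ρ * (x ⬝ᵥ x) := by rw [hyx]

/-- Exponential concentration of the kinetic energy of the Gaussian rectified flow: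
for `X ~ N(0, I_d)`, `E = ‖m₁ + (Σ₁^{1/2} - I)X‖²` and
`ρ = max_i (√λ_i(Σ₁) - 1)² > 0`, one has
`P(E ≥ u) ≤ 2^{d/2} exp(‖m₁‖²/(2ρ)) exp(-u/(4ρ))` for every `u > 0`. -/
theorem rectified_flow_energy_tail
    (d : ℕ) (hd : 0 < d) (m₁ : Fin d → ℝ)
    (Sig S : Matrix (Fin d) (Fin d) ℝ)
    (hSig : Sig.PosDef) (hHerm : Sig.IsHermitian)
    (hS : S.PosDef) (hSsq : S * S = Sig) (hne : Sig ≠ 1)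
    (ρ : ℝ)
    (hρ : ρ = ⨆ i : Fin d, (Real.sqrt (hHerm.eigenvalues i) - 1) ^ 2)
    (hρpos : 0 < ρ) (u : ℝ) (hu : 0 < u) :
    (Measure.pi fun _ : Fin d => gaussianReal 0 1)
        {x : Fin d → ℝ |
          u ≤ (m₁ + (S - 1) *ᵥ x) ⬝ᵥ (m₁ + (S - 1) *ᵥ x)} ≤
      ENNReal.ofReal
        ((2 : ℝ) ^ ((d : ℝ) / 2) * Real.exp ((m₁ ⬝ᵥ m₁) / (2 * ρ)) *
          Real.exp (-u / (4 * ρ))) := by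
  classical
  set γ : Measure ℝ := gaussianReal 0 1 with hγ
  set μ : Measure (Fin d → ℝ) := Measure.pi fun _ => γ with hμ
  set A : Matrix (Fin d) (Fin d) ℝ := S - 1 with hAdef
  set t : ℝ := (4 * ρ)⁻¹ with htdef
  have htpos : 0 < t := by positivity
  have hρbound : ∀ i, (Real.sqrt (hHerm.eigenvalues i) - 1)^2 ≤ ρ := by
    intro i
    rw [hρ]
    exact le_ciSup (f := fun i : Fin d => (Real.sqrt (hHerm.eigenvalues i) - 1)^2)
      (Set.Finite.bddAbove (Set.finite_range _)) i
  have hquad : ∀ v : Fin d → ℝ, (A *ᵥ v) ⬝ᵥ (A *ᵥ v) ≤ ρ * (v ⬝ᵥ v) :=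
    fun v => aux_quadratic_bound d Sig S hSig hHerm hS hSsq ρ hρbound v
  set w : Fin d → ℝ := fun i => 2 * t * ((A *ᵥ m₁) i) with hwdef
  set C : ℝ := rexp (t * (m₁ ⬝ᵥ m₁) - t * u) with hCdef
  -- symmetric A
  have hAsymm : Aᵀ = A := by
    rw [hAdef, Matrix.transpose_sub, Matrix.transpose_one,
      ← Matrix.conjTranspose_eq_transpose_of_trivial, hS.1.eq]
  -- expansion of the quadratic form
  have hexp : ∀ x : Fin d → ℝ,
      (m₁ + A *ᵥ x) ⬝ᵥ (m₁ + A *ᵥ x)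
        = m₁ ⬝ᵥ m₁ + 2 * ((A *ᵥ m₁) ⬝ᵥ x) + (A *ᵥ x) ⬝ᵥ (A *ᵥ x) := by
    intro x
    have h1 : m₁ ⬝ᵥ (A *ᵥ x) = (A *ᵥ m₁) ⬝ᵥ x := by
      rw [Matrix.dotProduct_mulVec, ← Matrix.mulVec_transpose, hAsymm]
    have h2 : (A *ᵥ x) ⬝ᵥ m₁ = (A *ᵥ m₁) ⬝ᵥ x := by
      rw [dotProduct_comm, h1]
    rw [add_dotProduct, dotProduct_add, dotProduct_add, h1, h2]
    ring
  -- key pointwise bound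
  have hkey : ∀ x : Fin d → ℝ,
      rexp (t * ((m₁ + A *ᵥ x) ⬝ᵥ (m₁ + A *ᵥ x) - u))
        ≤ C * ∏ i, rexp (w i * x i + (x i)^2/4) := by
    intro x
    rw [hCdef, ← Real.exp_sum, ← Real.exp_add]
    apply Real.exp_le_exp.mpr
    have hsum : ∑ i, (w i * x i + (x i)^2/4)
        = 2 * t * ((A *ᵥ m₁) ⬝ᵥ x) + (1/4) * (x ⬝ᵥ x) := by
      rw [Finset.sum_add_distrib, dotProduct, dotProduct, Finset.mul_sum,
        Finset.mul_sum]
      congr 1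
      · exact Finset.sum_congr rfl fun i _ => by rw [hwdef]; ring
      · exact Finset.sum_congr rfl fun i _ => by ring
    rw [hsum, hexp x]
    have h4 : t * ((A *ᵥ x) ⬝ᵥ (A *ᵥ x)) ≤ (1/4) * (x ⬝ᵥ x) := by
      have := mul_le_mul_of_nonneg_left (hquad x) htpos.le
      have ht4 : t * (ρ * (x ⬝ᵥ x)) = (1/4) * (x ⬝ᵥ x) := by
        rw [htdef]
        field_simp
      linarith
    nlinarith [h4]
  -- measurability of the factors
  have hfmeas : ∀ i : Fin d, Measurable fun y : ℝ => ENNReal.ofReal (rexp (w i * y + y^2/4)) := by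
    intro i
    fun_prop
  have hFmeas : Measurable fun x : Fin d → ℝ =>
      ∏ i, ENNReal.ofReal (rexp (w i * x i + (x i)^2/4)) :=
    Finset.measurable_prod _ fun i _ => (hfmeas i).comp (measurable_pi_apply i)
  set G : (Fin d → ℝ) → ℝ≥0∞ :=
    fun x => ENNReal.ofReal C * ∏ i, ENNReal.ofReal (rexp (w i * x i + (x i)^2/4)) with hGdef
  have hGmeas : Measurable G := hFmeas.const_mul _
  -- Chernoff step
  set s : Set (Fin d → ℝ) :=
    {x | u ≤ (m₁ + (S - 1) *ᵥ x) ⬝ᵥ (m₁ + (S - 1) *ᵥ x)} with hsdef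
  have hμs : μ s ≤ ∫⁻ x, G x ∂μ := by
    have h1 : μ s = ∫⁻ _ in s, 1 ∂μ := (setLIntegral_one s).symm
    have h2 : ∫⁻ _ in s, 1 ∂μ ≤ ∫⁻ x in s, G x ∂μ := by
      refine setLIntegral_mono hGmeas fun x hx => ?_
      have hxs : u ≤ (m₁ + A *ᵥ x) ⬝ᵥ (m₁ + A *ᵥ x) := hx
      have h1exp : (1:ℝ) ≤ rexp (t * ((m₁ + A *ᵥ x) ⬝ᵥ (m₁ + A *ᵥ x) - u)) :=
        Real.one_le_exp (by nlinarith)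
      have : (1:ℝ) ≤ C * ∏ i, rexp (w i * x i + (x i)^2/4) := le_trans h1exp (hkey x)
      calc (1 : ℝ≥0∞) = ENNReal.ofReal 1 := by simp
        _ ≤ ENNReal.ofReal (C * ∏ i, rexp (w i * x i + (x i)^2/4)) :=
            ENNReal.ofReal_le_ofReal this
        _ = G x := by
            have hC0 : 0 ≤ C := by rw [hCdef]; positivity
            rw [hGdef, ENNReal.ofReal_mul hC0,
              ENNReal.ofReal_prod_of_nonneg fun i _ => Real.exp_nonneg _]
    exact h1.le.trans (h2.trans (setLIntegral_le_lintegral s G))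
  -- compute the integral
  have hint : ∫⁻ x, G x ∂μ
      = ENNReal.ofReal C * ∏ i, ENNReal.ofReal (Real.sqrt 2 * rexp ((w i)^2)) := by
    rw [hGdef, hμ, lintegral_const_mul _ hFmeas,
      aux_lintegral_pi_prod d γ (fun i y => ENNReal.ofReal (rexp (w i * y + y^2/4))) hfmeas]
    congr 1
    exact Finset.prod_congr rfl fun i _ => aux_gauss1d (w i)
  have hC0 : 0 ≤ C := by rw [hCdef]; positivity
  have hprod : ∏ i : Fin d, ENNReal.ofReal (Real.sqrt 2 * rexp ((w i)^2))
      = ENNReal.ofReal ((Real.sqrt 2)^d * rexp (∑ i, (w i)^2)) := by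
    rw [← ENNReal.ofReal_prod_of_nonneg fun i _ => by positivity]
    congr 1
    rw [Finset.prod_mul_distrib, Finset.prod_const, Real.exp_sum]
    simp [Finset.card_univ]
  have hw2 : ∑ i, (w i)^2 ≤ (m₁ ⬝ᵥ m₁) / (4 * ρ) := by
    have h1 : ∑ i, (w i)^2 = (2*t)^2 * ((A *ᵥ m₁) ⬝ᵥ (A *ᵥ m₁)) := by
      rw [dotProduct, Finset.mul_sum]
      exact Finset.sum_congr rfl fun i _ => by rw [hwdef]; ring
    have h2 := mul_le_mul_of_nonneg_left (hquad m₁) (sq_nonneg (2*t))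
    have h3 : (2*t)^2 * (ρ * (m₁ ⬝ᵥ m₁)) = (m₁ ⬝ᵥ m₁)/(4*ρ) := by
      rw [htdef]; field_simp; ring
    rw [h1]
    linarith
  have hpow : (Real.sqrt 2)^d = (2:ℝ)^((d:ℝ)/2) := by
    rw [Real.sqrt_eq_rpow, ← Real.rpow_natCast ((2:ℝ) ^ ((1:ℝ)/2)) d,
      ← Real.rpow_mul (by norm_num : (0:ℝ) ≤ 2)]
    congr 1
    ring
  have hfin : C * ((Real.sqrt 2)^d * rexp (∑ i, (w i)^2))
      ≤ (2:ℝ)^((d:ℝ)/2) * rexp ((m₁ ⬝ᵥ m₁)/(2*ρ)) * rexp (-u/(4*ρ)) := by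
    rw [hpow, hCdef]
    rw [show rexp (t * (m₁ ⬝ᵥ m₁) - t*u) * ((2:ℝ)^((d:ℝ)/2) * rexp (∑ i, (w i)^2))
        = (2:ℝ)^((d:ℝ)/2) * rexp ((t * (m₁ ⬝ᵥ m₁) - t*u) + ∑ i, (w i)^2) by
      rw [Real.exp_add]; ring]
    rw [mul_assoc, ← Real.exp_add]
    refine mul_le_mul_of_nonneg_left (Real.exp_le_exp.mpr ?_) (by positivity)
    have e1 : t * (m₁ ⬝ᵥ m₁) = (m₁ ⬝ᵥ m₁)/(4*ρ) := by rw [htdef]; ring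
    have e2 : t * u = u/(4*ρ) := by rw [htdef]; ring
    have e3 : (m₁ ⬝ᵥ m₁)/(2*ρ) = (m₁ ⬝ᵥ m₁)/(4*ρ) + (m₁ ⬝ᵥ m₁)/(4*ρ) := by
      field_simp
      ring
    have e4 : -u/(4*ρ) = -(u/(4*ρ)) := by ring
    linarith
  calc μ s ≤ ∫⁻ x, G x ∂μ := hμs
    _ = ENNReal.ofReal C * ENNReal.ofReal ((Real.sqrt 2)^d * rexp (∑ i, (w i)^2)) := by
        rw [hint, hprod]
    _ = ENNReal.ofReal (C * ((Real.sqrt 2)^d * rexp (∑ i, (w i)^2))) :=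
        (ENNReal.ofReal_mul hC0).symm
    _ ≤ ENNReal.ofReal ((2:ℝ)^((d:ℝ)/2) * rexp ((m₁ ⬝ᵥ m₁)/(2*ρ)) * rexp (-u/(4*ρ))) :=
        ENNReal.ofReal_le_ofReal hfin
end

section
/- Let X₀ ~ N(0, I_d) and let D be a fixed dataset with M = max_i ‖x⁽ⁱ⁾‖ < ∞. Let ψ_t solve ψ'_t = v̂*(t, ψ_t), ψ_0 = X₀, where v̂* is the empirical rectified-flow velocity field satisfying ‖v̂*(t,z)‖ ≤ (M + ‖z‖)/(1-t). Fix t ∈ [0,T] with T < 1 and let K_t = ‖v̂*(t, ψ_t)‖². Then there exist constants C = e^{M²/16} and c_t = (1-t)⁴/32 such that for all u ≥ 2(1-t)^{-4}(2d + M²), P(K_t ≥ u) ≤ C e^{-c_t u}. -/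
open MeasureTheory ProbabilityTheory Set Real
open scoped ENNReal NNReal

lemma gauss_fun_eq (y : ℝ) :
    Real.exp (y ^ 2 / 4) * gaussianPDFReal 0 1 y
      = (Real.sqrt (2 * π))⁻¹ * Real.exp (-(1/4) * y ^ 2) := by
  simp only [gaussianPDFReal_def, NNReal.coe_one, mul_one, sub_zero]
  rw [mul_left_comm, ← Real.exp_add]
  congr 2
  ring

lemma gauss_int1 : Integrable (fun y : ℝ => Real.exp (y ^ 2 / 4)) (gaussianReal 0 1) := by
  rw [gaussianReal_of_var_ne_zero 0 one_ne_zero]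
  rw [integrable_withDensity_iff (measurable_gaussianPDF 0 1)
    (Filter.Eventually.of_forall fun _ => ENNReal.ofReal_lt_top)]
  have : (fun y : ℝ => Real.exp (y ^ 2 / 4) * (gaussianPDF 0 1 y).toReal)
      = fun y => (Real.sqrt (2 * π))⁻¹ * Real.exp (-(1/4) * y ^ 2) := by
    funext y
    rw [gaussianPDF_def, ENNReal.toReal_ofReal (gaussianPDFReal_nonneg 0 1 y), gauss_fun_eq]
  rw [this]
  exact (integrable_exp_neg_mul_sq (by norm_num : (0:ℝ) < 1/4)).const_mul _

lemma gauss_val1 : ∫ y, Real.exp (y ^ 2 / 4) ∂(gaussianReal 0 1) = Real.sqrt 2 := by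
  rw [gaussianReal_of_var_ne_zero 0 one_ne_zero]
  have hpdf : gaussianPDF 0 1 = fun y => ((gaussianPDFReal 0 1 y).toNNReal : ℝ≥0∞) := by
    funext y; rw [gaussianPDF_def]; rfl
  rw [hpdf, integral_withDensity_eq_integral_smul
    ((measurable_gaussianPDFReal 0 1).real_toNNReal)]
  have : (fun y : ℝ => (gaussianPDFReal 0 1 y).toNNReal • Real.exp (y ^ 2 / 4))
      = fun y => (Real.sqrt (2 * π))⁻¹ * Real.exp (-(1/4) * y ^ 2) := by
    funext y
    rw [NNReal.smul_def, smul_eq_mul, Real.coe_toNNReal _ (gaussianPDFReal_nonneg 0 1 y),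
      mul_comm, gauss_fun_eq]
  rw [this, integral_const_mul, integral_gaussian]
  rw [show π / (1/4) = 2 * (2 * π) by ring,
    Real.sqrt_mul (by norm_num : (0:ℝ) ≤ 2)]
  have hne : Real.sqrt (2 * π) ≠ 0 := by positivity
  field_simp
  rw [Real.sqrt_mul (by positivity), Real.sqrt_sq (by norm_num : (0:ℝ) ≤ 2),
    Real.sq_sqrt (by norm_num : (0:ℝ) ≤ 2)]

lemma gauss_prod_lintegral (d : ℕ) :
    ∫⁻ x : Fin d → ℝ, ENNReal.ofReal (∏ i, Real.exp ((x i) ^ 2 / 4))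
        ∂(Measure.pi fun _ : Fin d => gaussianReal 0 1)
      = ENNReal.ofReal (Real.sqrt 2 ^ d) := by
  letI : MeasureSpace ℝ := ⟨gaussianReal 0 1⟩
  haveI : SigmaFinite (volume : Measure ℝ) := inferInstanceAs (SigmaFinite (gaussianReal 0 1))
  have hInt : Integrable (fun x : Fin d → ℝ => ∏ i, Real.exp ((x i) ^ 2 / 4))
      (Measure.pi fun _ : Fin d => gaussianReal 0 1) :=
    Integrable.fintype_prod (f := fun _ y => Real.exp (y ^ 2 / 4)) (fun _ => gauss_int1)
  rw [← ofReal_integral_eq_lintegral_ofReal hInt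
    (Filter.Eventually.of_forall fun y => Finset.prod_nonneg fun i _ => (Real.exp_pos _).le)]
  congr 1
  have h2 : (∫ x : Fin d → ℝ, ∏ i, Real.exp ((x i) ^ 2 / 4)
      ∂(Measure.pi fun _ : Fin d => gaussianReal 0 1))
      = (∫ y, Real.exp (y ^ 2 / 4) ∂(gaussianReal 0 1)) ^ Fintype.card (Fin d) :=
    integral_fintype_prod_eq_pow (fun y : ℝ => Real.exp (y ^ 2 / 4))
  rw [h2, gauss_val1, Fintype.card_fin]

lemma gauss_norm_sq_tail (d : ℕ) (s : ℝ) (hs : 2 * d ≤ s) :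
    (Measure.pi fun _ : Fin d => gaussianReal 0 1)
        {x : Fin d → ℝ | s ≤ ‖WithLp.toLp 2 x‖ ^ 2}
      ≤ ENNReal.ofReal (Real.exp (-s / 16)) := by
  set μ : Measure (Fin d → ℝ) := Measure.pi fun _ : Fin d => gaussianReal 0 1
    with hμ
  have hnorm : ∀ x : Fin d → ℝ, ‖WithLp.toLp 2 x‖ ^ 2 = ∑ i, (x i) ^ 2 := by
    intro x
    rw [EuclideanSpace.norm_eq, Real.sq_sqrt (Finset.sum_nonneg fun i _ => sq_nonneg _)]
    simp [sq_abs]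
  have hexp : ∀ x : Fin d → ℝ,
      Real.exp (‖WithLp.toLp 2 x‖ ^ 2 / 4) = ∏ i, Real.exp ((x i) ^ 2 / 4) := by
    intro x
    rw [hnorm, ← Real.exp_sum, Finset.sum_div]
  have hfm : Measurable (fun x : Fin d → ℝ =>
      ENNReal.ofReal (∏ i, Real.exp ((x i) ^ 2 / 4))) := by
    apply Measurable.ennreal_ofReal
    apply Finset.measurable_prod
    intro i _
    exact Real.measurable_exp.comp (((measurable_pi_apply i).pow_const 2).div_const 4)
  have hmark := mul_meas_ge_le_lintegral₀ (μ := μ) hfm.aemeasurable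
    (ENNReal.ofReal (Real.exp (s / 4)))
  rw [hμ, gauss_prod_lintegral d] at hmark
  have hsub : {x : Fin d → ℝ | s ≤ ‖WithLp.toLp 2 x‖ ^ 2} ⊆
      {x | ENNReal.ofReal (Real.exp (s / 4)) ≤
        ENNReal.ofReal (∏ i, Real.exp ((x i) ^ 2 / 4))} := by
    intro x hx
    simp only [mem_setOf_eq] at hx ⊢
    rw [← hexp]
    exact ENNReal.ofReal_le_ofReal (Real.exp_le_exp.2 (by linarith))
  refine (measure_mono hsub).trans ?_
  have hne : ENNReal.ofReal (Real.exp (s / 4)) ≠ 0 := by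
    simp [Real.exp_pos]
  have hnt : ENNReal.ofReal (Real.exp (s / 4)) ≠ ⊤ := ENNReal.ofReal_ne_top
  have hdiv : μ {x | ENNReal.ofReal (Real.exp (s / 4)) ≤
        ENNReal.ofReal (∏ i, Real.exp ((x i) ^ 2 / 4))}
      ≤ ENNReal.ofReal (Real.sqrt 2 ^ d) / ENNReal.ofReal (Real.exp (s / 4)) := by
    rw [ENNReal.le_div_iff_mul_le (Or.inl hne) (Or.inl hnt), mul_comm]
    exact hmark
  refine hdiv.trans ?_
  rw [← ENNReal.ofReal_div_of_pos (Real.exp_pos _)]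
  apply ENNReal.ofReal_le_ofReal
  -- √2 ^ d / exp (s/4) ≤ exp (-s/16)
  have h2 : Real.sqrt 2 ^ d = Real.exp (d * (Real.log 2 / 2)) := by
    rw [← Real.log_sqrt (by norm_num : (0:ℝ) ≤ 2), Real.exp_nat_mul,
      Real.exp_log (Real.sqrt_pos.2 (by norm_num))]
  rw [h2, div_eq_mul_inv, ← Real.exp_neg, ← Real.exp_add]
  apply Real.exp_le_exp.2
  have hlog := Real.log_two_lt_d9
  have hd : (0:ℝ) ≤ d := Nat.cast_nonneg d
  nlinarith [Real.log_two_gt_d9]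

lemma traj_bound {d : ℕ} (M T : ℝ) (hT1 : T < 1)
    (v : ℝ → EuclideanSpace ℝ (Fin d) → EuclideanSpace ℝ (Fin d))
    (hv_bound : ∀ (t : ℝ), 0 ≤ t → t < 1 → ∀ z, ‖v t z‖ ≤ (M + ‖z‖) / (1 - t))
    (ψ : ℝ → EuclideanSpace ℝ (Fin d)) (x₀ : EuclideanSpace ℝ (Fin d))
    (hψ0 : ψ 0 = x₀)
    (hψderiv : ∀ s ∈ Icc (0 : ℝ) T, HasDerivAt ψ (v s (ψ s)) s)
    (t : ℝ) (ht0 : 0 ≤ t) (htT : t ≤ T) :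
    ‖ψ t‖ ≤ ‖x₀‖ * (1 - t)⁻¹ + M * ((1 - t)⁻¹ - 1) := by
  have ht1 : t < 1 := lt_of_le_of_lt htT hT1
  have h1t : (0:ℝ) < 1 - t := by linarith
  set b : ℝ := -Real.log (1 - t) with hbdef
  have hb0 : 0 ≤ b := by
    have := Real.log_nonpos (by linarith) (by linarith : 1 - t ≤ 1)
    simp only [hbdef]; linarith
  have hexpb : Real.exp (-b) = 1 - t := by
    rw [hbdef, neg_neg, Real.exp_log h1t]
  set τ : ℝ → ℝ := fun s => 1 - Real.exp (-s) with hτdef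
  have hτ0 : ∀ s, 0 ≤ s → 0 ≤ τ s := by
    intro s hs
    have : Real.exp (-s) ≤ 1 := Real.exp_le_one_iff.2 (by linarith)
    simp only [hτdef]; linarith
  have hτt : ∀ s, s ≤ b → τ s ≤ t := by
    intro s hs
    have : Real.exp (-b) ≤ Real.exp (-s) := Real.exp_le_exp.2 (by linarith)
    rw [hexpb] at this
    simp only [hτdef]; linarith
  have hτd : ∀ s : ℝ, HasDerivAt τ (Real.exp (-s)) s := by
    intro s
    have h1 : HasDerivAt (fun s : ℝ => Real.exp (-s)) (Real.exp (-s) * (-1)) s :=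
      (Real.hasDerivAt_exp (-s)).comp s (hasDerivAt_neg s)
    exact ((hasDerivAt_const s (1:ℝ)).sub h1).congr_deriv (by ring)
  set φ : ℝ → EuclideanSpace ℝ (Fin d) := fun s => ψ (τ s) with hφdef
  have hφd : ∀ s ∈ Icc (0:ℝ) b, HasDerivAt φ (Real.exp (-s) • v (τ s) (φ s)) s := by
    intro s hs
    exact (hψderiv (τ s) ⟨hτ0 s hs.1, le_trans (hτt s hs.2) htT⟩).scomp s (hτd s)
  have key := norm_le_gronwallBound_of_norm_deriv_right_le
    (f := φ) (f' := fun s => Real.exp (-s) • v (τ s) (φ s)) (δ := ‖x₀‖) (K := 1) (ε := M)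
    (a := 0) (b := b)
    (fun s hs => (hφd s hs).continuousAt.continuousWithinAt)
    (fun s hs => (hφd s (Ico_subset_Icc_self hs)).hasDerivWithinAt)
    (by rw [hφdef]; simp only [hτdef]; simp [hψ0])
    ?_ b (right_mem_Icc.2 hb0)
  · have hτb : τ b = t := by simp only [hτdef]; rw [hexpb]; ring
    have hexpb' : Real.exp b = (1 - t)⁻¹ := by
      rw [← hexpb, ← Real.exp_neg, neg_neg]
    rw [gronwallBound_of_K_ne_0 one_ne_zero] at key
    simp only [hφdef, hτb, sub_zero, one_mul, div_one, hexpb'] at key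
    linarith [key]
  · intro s hs
    have hs0 := hs.1
    have hτs1 : τ s < 1 := by
      have : 0 < Real.exp (-s) := Real.exp_pos _
      simp only [hτdef]; linarith
    have hb1 := hv_bound (τ s) (hτ0 s hs0) hτs1 (φ s)
    have h1τ : 1 - τ s = Real.exp (-s) := by simp only [hτdef]; ring
    rw [norm_smul, Real.norm_eq_abs, abs_of_pos (Real.exp_pos _)]
    calc Real.exp (-s) * ‖v (τ s) (φ s)‖
        ≤ Real.exp (-s) * ((M + ‖φ s‖) / (1 - τ s)) := by
          exact mul_le_mul_of_nonneg_left hb1 (Real.exp_pos _).le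
      _ = M + ‖φ s‖ := by rw [h1τ]; field_simp
      _ = 1 * ‖φ s‖ + M := by ring

/-- Exponential tail of the instantaneous kinetic energy of the empirical rectified flow
with Gaussian source: with `X₀ ~ N(0, I_d)`, `M = max_i ‖x⁽ⁱ⁾‖`, `ψ` the flow of the
empirical rectified-flow velocity field `v̂*` (which satisfies
`‖v̂*(t,z)‖ ≤ (M + ‖z‖)/(1-t)`), and `K_t = ‖v̂*(t, ψ_t)‖²`, for every
`u ≥ 2(1-t)^{-4}(2d + M²)` one has `P(K_t ≥ u) ≤ e^{M²/16} e^{-(1-t)⁴ u/32}`. -/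
theorem empirical_rf_kinetic_energy_tail
    (d N : ℕ) [NeZero N] (x : Fin N → EuclideanSpace ℝ (Fin d))
    (M : ℝ)
    (hM : M = Finset.univ.sup' (Finset.univ_nonempty (α := Fin N)) fun i => ‖x i‖)
    (T : ℝ) (hT0 : 0 ≤ T) (hT1 : T < 1)
    (v : ℝ → EuclideanSpace ℝ (Fin d) → EuclideanSpace ℝ (Fin d))
    -- `v` is the empirical rectified-flow (softmax) velocity field
    (hv_def : ∀ (t : ℝ), 0 ≤ t → t < 1 → ∀ z,
      v t z = ∑ i, (Real.exp (-‖z - t • x i‖ ^ 2 / (2 * (1 - t) ^ 2)) /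
          ∑ j, Real.exp (-‖z - t • x j‖ ^ 2 / (2 * (1 - t) ^ 2))) •
        ((1 - t)⁻¹ • (x i - z)))
    -- and in particular satisfies the growth bound
    (hv_bound : ∀ (t : ℝ), 0 ≤ t → t < 1 → ∀ z, ‖v t z‖ ≤ (M + ‖z‖) / (1 - t))
    (ψ : EuclideanSpace ℝ (Fin d) → ℝ → EuclideanSpace ℝ (Fin d))
    (hψ0 : ∀ x₀, ψ x₀ 0 = x₀)
    (hψderiv : ∀ x₀, ∀ t ∈ Icc (0 : ℝ) T, HasDerivAt (ψ x₀) (v t (ψ x₀ t)) t)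
    (t : ℝ) (ht : t ∈ Icc (0 : ℝ) T)
    (u : ℝ) (hu : 2 * (2 * d + M ^ 2) / (1 - t) ^ 4 ≤ u) :
    (Measure.pi fun _ : Fin d => gaussianReal 0 1)
        {x₀ : Fin d → ℝ | u ≤ ‖v t (ψ (WithLp.toLp 2 x₀) t)‖ ^ 2} ≤
      ENNReal.ofReal (Real.exp (M ^ 2 / 16) * Real.exp (-((1 - t) ^ 4 / 32) * u)) := by
  have ht1 : t < 1 := lt_of_le_of_lt ht.2 hT1
  have h1t : (0:ℝ) < 1 - t := by linarith
  have h4 : (0:ℝ) < (1 - t) ^ 4 := by positivity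
  set s : ℝ := u * (1 - t) ^ 4 / 2 - M ^ 2 with hsdef
  have hs2d : 2 * d ≤ s := by
    rw [div_le_iff₀ h4] at hu
    rw [hsdef]
    nlinarith
  have hsub : {x₀ : Fin d → ℝ | u ≤ ‖v t (ψ (WithLp.toLp 2 x₀) t)‖ ^ 2} ⊆
      {x₀ : Fin d → ℝ | s ≤ ‖WithLp.toLp 2 x₀‖ ^ 2} := by
    intro x₀' hx
    set x₀ := WithLp.toLp 2 x₀' with hx₀
    simp only [mem_setOf_eq] at hx ⊢
    have htraj := traj_bound M T hT1 v hv_bound (ψ x₀) x₀ (hψ0 x₀) (hψderiv x₀) t ht.1 ht.2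
    have hv := hv_bound t ht.1 ht1 (ψ x₀ t)
    have h1 : M + ‖ψ x₀ t‖ ≤ (‖x₀‖ + M) / (1 - t) := by
      have he : (‖x₀‖ + M) / (1 - t) = ‖x₀‖ * (1 - t)⁻¹ + M * (1 - t)⁻¹ := by
        field_simp
      rw [he]; linarith
    have h2 : ‖v t (ψ x₀ t)‖ ≤ (‖x₀‖ + M) / (1 - t) ^ 2 := by
      refine hv.trans ?_
      rw [show (1 - t) ^ 2 = (1 - t) * (1 - t) by ring, ← div_div]
      exact (div_le_div_iff_of_pos_right h1t).2 h1
    have h3 : u ≤ (‖x₀‖ + M) ^ 2 / (1 - t) ^ 4 := by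
      refine hx.trans ?_
      calc ‖v t (ψ x₀ t)‖ ^ 2 ≤ ((‖x₀‖ + M) / (1 - t) ^ 2) ^ 2 :=
            pow_le_pow_left₀ (norm_nonneg _) h2 2
        _ = (‖x₀‖ + M) ^ 2 / (1 - t) ^ 4 := by rw [div_pow]; ring_nf
    rw [le_div_iff₀ h4] at h3
    rw [hsdef]
    nlinarith [sq_nonneg (‖x₀‖ - M)]
  refine (measure_mono hsub).trans ?_
  refine (gauss_norm_sq_tail d s hs2d).trans_eq ?_
  congr 1
  rw [← Real.exp_add]
  congr 1
  rw [hsdef]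
  ring
end

section
/- Under the hypotheses of the instantaneous bound, the integrated kinetic energy E_T = ∫₀ᵀ K_t dt satisfies E_T ≤ c₃(T)(‖X₀‖² + M²) with c₃(T) = (2/3)((1-T)^{-3} - 1), and consequently for all u ≥ c₃(T)(2d + M²), P(E_T ≥ u) ≤ e^{M²/16} · exp(-u / (16 c₃(T))). -/
open MeasureTheory ProbabilityTheory Set Real ENNReal

lemma aux_lintegral_pi (n : ℕ) (μ : Measure ℝ) [SigmaFinite μ] (f : ℝ → ℝ≥0∞)
    (hf : Measurable f) :
    ∫⁻ x : Fin n → ℝ, ∏ i, f (x i) ∂Measure.pi (fun _ => μ) = (∫⁻ x, f x ∂μ) ^ n := by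
  induction n with
  | zero => simp
  | succ n ih =>
    have hmp := (measurePreserving_piFinSuccAbove (fun _ : Fin (n + 1) => μ) 0).symm
    have hmeas : Measurable fun x : Fin (n + 1) → ℝ => ∏ i, f (x i) := by
      exact Finset.measurable_prod _ fun i _ => hf.comp (measurable_pi_apply i)
    rw [← hmp.lintegral_comp hmeas]
    simp only [MeasurableEquiv.piFinSuccAbove_symm_apply, Fin.insertNthEquiv,
      Equiv.coe_fn_mk, Fin.insertNth_zero]
    simp_rw [Fin.prod_univ_succ, Fin.cons_succ, Fin.cons_zero, cast_eq]
    have h2 : AEMeasurable (fun b : Fin n → ℝ => ∏ i : Fin n, f (b i))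
        (Measure.pi fun _ => μ) :=
      (Finset.measurable_prod Finset.univ
        (fun (i : Fin n) _ => hf.comp (measurable_pi_apply i))).aemeasurable
    rw [lintegral_prod_mul hf.aemeasurable h2, ih, pow_succ]
    ring

lemma aux_gauss :
    ∫⁻ x : ℝ, ENNReal.ofReal (rexp (x ^ 2 / 4)) ∂gaussianReal 0 1
      = ENNReal.ofReal (Real.sqrt 2) := by
  rw [gaussianReal_of_var_ne_zero 0 one_ne_zero,
    lintegral_withDensity_eq_lintegral_mul _ (measurable_gaussianPDF 0 1)
      (by measurability)]
  have h1 : ∀ x : ℝ, (gaussianPDF 0 1 * fun x => ENNReal.ofReal (rexp (x ^ 2 / 4))) x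
      = ENNReal.ofReal ((√(2 * π))⁻¹ * rexp (-(4⁻¹) * x ^ 2)) := by
    intro x
    simp only [Pi.mul_apply, gaussianPDF, gaussianPDFReal]
    rw [← ENNReal.ofReal_mul (by positivity)]
    congr 1
    push_cast
    rw [mul_assoc, ← Real.exp_add]
    norm_num
    left
    ring_nf
  simp_rw [h1]
  rw [← ofReal_integral_eq_lintegral_ofReal
    ((integrable_exp_neg_mul_sq (by norm_num : (0:ℝ) < 4⁻¹)).const_mul _)
    (Filter.Eventually.of_forall fun x => by positivity)]
  rw [integral_const_mul, integral_gaussian]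
  congr 1
  have hπ : 0 < π := pi_pos
  rw [show π / 4⁻¹ = 2 * (2 * π) by ring, Real.sqrt_mul (by norm_num)]
  have h2 : Real.sqrt (2 * π) ≠ 0 := by positivity
  field_simp
  rw [Real.sqrt_mul (by positivity), Real.sqrt_sq (by norm_num : (0:ℝ) ≤ 2),
    Real.sq_sqrt (by norm_num : (0:ℝ) ≤ 2)]

/-- Integrated kinetic-energy bound and exponential tail for the empirical rectified flow
with Gaussian source: if `K_t ≤ 2(1-t)^{-4}(‖X₀‖² + M²)` on `[0,T]` with `T < 1`, then
`E_T = ∫₀ᵀ K_t dt ≤ c₃(T)(‖X₀‖² + M²)` with `c₃(T) = (2/3)((1-T)^{-3} - 1)`, and for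
every `u ≥ c₃(T)(2d + M²)`, `P(E_T ≥ u) ≤ e^{M²/16} e^{-u/(16 c₃(T))}`. -/
theorem empirical_rf_integrated_energy_tail
    (d : ℕ) (T : ℝ) (hT0 : 0 < T) (hT1 : T < 1) (M : ℝ) (hM : 0 ≤ M)
    (K : ℝ → EuclideanSpace ℝ (Fin d) → ℝ)
    (hK_nonneg : ∀ t x₀, 0 ≤ K t x₀)
    (hK : ∀ x₀, ∀ t ∈ Icc (0 : ℝ) T, K t x₀ ≤ 2 / (1 - t) ^ 4 * (‖x₀‖ ^ 2 + M ^ 2))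
    (hKint : ∀ x₀, IntervalIntegrable (fun t => K t x₀) volume 0 T)
    (c₃ : ℝ) (hc₃ : c₃ = (2 / 3) * (((1 - T) ^ 3)⁻¹ - 1)) :
    (∀ x₀, (∫ t in (0 : ℝ)..T, K t x₀) ≤ c₃ * (‖x₀‖ ^ 2 + M ^ 2)) ∧
      ∀ u : ℝ, c₃ * (2 * d + M ^ 2) ≤ u →
        (Measure.pi fun _ : Fin d => gaussianReal 0 1)
            (WithLp.toLp 2 ⁻¹' {x₀ : EuclideanSpace ℝ (Fin d) | u ≤ ∫ t in (0 : ℝ)..T, K t x₀}) ≤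
          ENNReal.ofReal (Real.exp (M ^ 2 / 16) * Real.exp (-u / (16 * c₃))) := by
  have hT01 : 0 < 1 - T := by linarith
  -- continuity / integrability of the rate function
  have hcont : ∀ A : ℝ, ContinuousOn (fun t : ℝ => 2 / (1 - t) ^ 4 * A) (Icc 0 T) := by
    intro A
    apply ContinuousOn.mul _ continuousOn_const
    apply ContinuousOn.div continuousOn_const
    · exact ((continuousOn_const.sub continuousOn_id).pow 4)
    · intro t ht
      have : 0 < 1 - t := by have := ht.2; linarith
      positivity
  -- the key interval integral
  have hFTC : (∫ t in (0:ℝ)..T, 2 / (1 - t) ^ 4) = c₃ := by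
    have hderiv : ∀ t ∈ uIcc (0:ℝ) T,
        HasDerivAt (fun t : ℝ => (2/3) * ((1 - t) ^ 3)⁻¹) (2 / (1 - t) ^ 4) t := by
      intro t ht
      rw [uIcc_of_le hT0.le] at ht
      have h1t : 0 < 1 - t := by have := ht.2; linarith
      have h0 : HasDerivAt (fun x : ℝ => 1 - x) (-1) t := (hasDerivAt_id t).const_sub 1
      have h1 : HasDerivAt (fun x : ℝ => (1 - x) ^ 3)
          ((3 : ℕ) * (1 - t) ^ 2 * (-1)) t := by
        simpa using h0.fun_pow 3
      have h2 := (h1.inv (pow_ne_zero 3 h1t.ne')).const_mul (2/3 : ℝ)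
      refine h2.congr_deriv ?_
      have := h1t.ne'
      field_simp
      ring
    have hintg : IntervalIntegrable (fun t : ℝ => 2 / (1 - t) ^ 4) volume 0 T := by
      have := (hcont 1).mono (by rw [uIcc_of_le hT0.le] : uIcc (0:ℝ) T ⊆ Icc 0 T)
      simpa using this.intervalIntegrable
    rw [intervalIntegral.integral_eq_sub_of_hasDerivAt hderiv hintg]
    rw [hc₃]
    norm_num
    ring
  -- Part 1
  have part1 : ∀ x₀ : EuclideanSpace ℝ (Fin d),
      (∫ t in (0 : ℝ)..T, K t x₀) ≤ c₃ * (‖x₀‖ ^ 2 + M ^ 2) := by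
    intro x₀
    set A := ‖x₀‖ ^ 2 + M ^ 2 with hA
    have hA0 : 0 ≤ A := by positivity
    have hbint : IntervalIntegrable (fun t : ℝ => 2 / (1 - t) ^ 4 * A) volume 0 T := by
      have := (hcont A).mono (by rw [uIcc_of_le hT0.le] : uIcc (0:ℝ) T ⊆ Icc 0 T)
      simpa using this.intervalIntegrable
    calc (∫ t in (0 : ℝ)..T, K t x₀)
        ≤ ∫ t in (0 : ℝ)..T, 2 / (1 - t) ^ 4 * A :=
          intervalIntegral.integral_mono_on hT0.le (hKint x₀) hbint (hK x₀)
      _ = (∫ t in (0 : ℝ)..T, 2 / (1 - t) ^ 4) * A := by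
          rw [intervalIntegral.integral_mul_const]
      _ = c₃ * A := by rw [hFTC]
  refine ⟨part1, ?_⟩
  -- positivity of c₃
  have hc₃pos : 0 < c₃ := by
    rw [hc₃]
    have h1 : (1 - T) ^ 3 < 1 :=
      pow_lt_one₀ hT01.le (by linarith) (by norm_num)
    have h2 : 1 < ((1 - T) ^ 3)⁻¹ :=
      (one_lt_inv₀ (by positivity : (0:ℝ) < (1 - T) ^ 3)).mpr h1
    nlinarith
  intro u hu
  obtain ⟨s, hs_def⟩ : ∃ s : ℝ, s = u / c₃ - M ^ 2 := ⟨_, rfl⟩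
  have hs : 2 * d ≤ s := by
    have h1 : 2 * d + M ^ 2 ≤ u / c₃ := (le_div_iff₀ hc₃pos).mpr (by linarith [hu, mul_comm c₃ (2 * d + M ^ 2)])
    simp only [hs_def]; linarith
  have hd0 : (0:ℝ) ≤ d := Nat.cast_nonneg d
  have hs0 : 0 ≤ s := by linarith
  -- the exponential moment function
  set g : ℝ → ENNReal := fun y => ENNReal.ofReal (rexp (y ^ 2 / 4)) with hg_def
  have hgmeas : Measurable g := by
    apply ENNReal.measurable_ofReal.comp
    exact (Real.continuous_exp.comp ((continuous_pow 2).div_const 4)).measurable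
  set f : EuclideanSpace ℝ (Fin d) → ENNReal :=
    fun x => ENNReal.ofReal (rexp (‖x‖ ^ 2 / 4)) with hf_def
  have hfprod : ∀ x : EuclideanSpace ℝ (Fin d), f x = ∏ i, g (x i) := by
    intro x
    have hnorm : ‖x‖ ^ 2 = ∑ i, x i ^ 2 := by
      rw [EuclideanSpace.norm_eq, sq_sqrt (by positivity)]
      simp [sq_abs]
    simp only [hf_def, hg_def]
    rw [hnorm, ← ENNReal.ofReal_prod_of_nonneg (fun i _ => (Real.exp_pos _).le),
      ← Real.exp_sum, Finset.sum_div]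
  have hfmeas : Measurable f := by
    apply ENNReal.measurable_ofReal.comp
    exact (Real.continuous_exp.comp ((continuous_norm.pow 2).div_const 4)).measurable
  -- Markov
  set μ := Measure.pi fun _ : Fin d => gaussianReal 0 1 with hμ
  have hlint : ∫⁻ x, f (WithLp.toLp 2 x) ∂μ = (ENNReal.ofReal (Real.sqrt 2)) ^ d := by
    simp_rw [hfprod]
    rw [← aux_gauss]
    exact aux_lintegral_pi d (gaussianReal 0 1) g hgmeas
  have hsub : {x₀ : EuclideanSpace ℝ (Fin d) | u ≤ ∫ t in (0 : ℝ)..T, K t x₀}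
      ⊆ {x | ENNReal.ofReal (rexp (s / 4)) ≤ f x} := by
    intro x hx
    have h1 : u ≤ c₃ * (‖x‖ ^ 2 + M ^ 2) := le_trans hx (part1 x)
    have h2 : s ≤ ‖x‖ ^ 2 := by
      have h3 : u / c₃ ≤ ‖x‖ ^ 2 + M ^ 2 :=
        (div_le_iff₀ hc₃pos).mpr (by linarith [mul_comm c₃ (‖x‖ ^ 2 + M ^ 2)])
      simp only [hs_def]
      linarith
    exact ENNReal.ofReal_le_ofReal (Real.exp_le_exp.mpr (by linarith))
  have hmarkov := mul_meas_ge_le_lintegral₀ (μ := μ) (hfmeas.comp (PiLp.continuous_toLp 2 _).measurable).aemeasurable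
      (ENNReal.ofReal (rexp (s / 4)))
  have hε0 : ENNReal.ofReal (rexp (s / 4)) ≠ 0 := by
    simp [ENNReal.ofReal_eq_zero, not_le, Real.exp_pos]
  have hεtop : ENNReal.ofReal (rexp (s / 4)) ≠ ⊤ := ENNReal.ofReal_ne_top
  have hchain : ENNReal.ofReal (rexp (s / 4)) *
      μ (WithLp.toLp 2 ⁻¹' {x₀ : EuclideanSpace ℝ (Fin d) | u ≤ ∫ t in (0 : ℝ)..T, K t x₀})
      ≤ (ENNReal.ofReal (Real.sqrt 2)) ^ d := by
    calc ENNReal.ofReal (rexp (s / 4)) *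
        μ (WithLp.toLp 2 ⁻¹' {x₀ : EuclideanSpace ℝ (Fin d) | u ≤ ∫ t in (0 : ℝ)..T, K t x₀})
        ≤ ENNReal.ofReal (rexp (s / 4)) * μ {x | ENNReal.ofReal (rexp (s / 4)) ≤ f (WithLp.toLp 2 x)} :=
          mul_le_mul_right (measure_mono (Set.preimage_mono hsub)) _
      _ ≤ ∫⁻ x, f (WithLp.toLp 2 x) ∂μ := hmarkov
      _ = _ := hlint
  -- final real-number inequality
  have hreal : Real.sqrt 2 ^ d ≤
      rexp (s / 4) * (rexp (M ^ 2 / 16) * rexp (-u / (16 * c₃))) := by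
    have h1 : Real.sqrt 2 ^ d = rexp (d * Real.log (Real.sqrt 2)) := by
      rw [Real.exp_nat_mul, Real.exp_log (Real.sqrt_pos.mpr two_pos)]
    rw [h1, ← Real.exp_add, ← Real.exp_add, Real.exp_le_exp,
      Real.log_sqrt (by norm_num : (0:ℝ) ≤ 2)]
    have hu16 : u / (16 * c₃) = (s + M ^ 2) / 16 := by
      have : u = c₃ * (s + M ^ 2) := by
        simp only [hs_def]
        field_simp
        ring
      rw [this]
      field_simp
    have hmul : (d : ℝ) * Real.log 2 ≤ (d : ℝ) * 0.6931471808 :=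
      mul_le_mul_of_nonneg_left Real.log_two_lt_d9.le hd0
    have : -u / (16 * c₃) = -((s + M ^ 2) / 16) := by rw [neg_div, hu16]
    rw [this]
    linarith
  have hle2 : (ENNReal.ofReal (Real.sqrt 2)) ^ d ≤ ENNReal.ofReal (rexp (s / 4)) *
      ENNReal.ofReal (rexp (M ^ 2 / 16) * rexp (-u / (16 * c₃))) := by
    rw [← ENNReal.ofReal_pow (Real.sqrt_nonneg 2), ← ENNReal.ofReal_mul (Real.exp_pos _).le]
    exact ENNReal.ofReal_le_ofReal hreal
  exact (ENNReal.mul_le_mul_iff_right hε0 hεtop).mp (hchain.trans hle2)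
end
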